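/- Fix $s \in \mathbb{R}$ and $c \in \mathbb{C}$, and suppose $\phi_N : [0, \lambda_0] \to \mathbb{C}$ is differentiable with $\phi_N(0) = 1$, $|\phi_N(\lambda)| \le 1$, and $|\phi_N'(\lambda) - c\,\tfrac{\lambda}{1-\lambda}\,\phi_N(\lambda)| \le K/\sqrt{N}$ for all $\lambda \in [0,\lambda_0]$, where $\lambda_0 < 1$ and $K < \infty$. Then for all $\lambda \in [0, \lambda_0]$, $|\phi_N(\lambda) - \exp(c\,(-\lambda - \log(1-\lambda)))| \le K' / \sqrt{N}$ for a constant $K' = K'(\lambda_0, c, K)$ independent of $N$. -/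

import Mathlib

open Complex

lemma aux_deriv7 (c : ℂ) (z : ℂ) (hz : (1 - z).re > 0) :
    HasDerivAt (fun w => c * (-w - Complex.log (1 - w))) (c * (z / (1 - z))) z := by
  have hmem : 1 - z ∈ Complex.slitPlane := Or.inl hz
  have hne : (1 : ℂ) - z ≠ 0 := Complex.slitPlane_ne_zero hmem
  have h1 : HasDerivAt (fun w : ℂ => 1 - w) (-1) z := by
    simpa using (hasDerivAt_id z).const_sub 1
  have hlog : HasDerivAt (fun w : ℂ => Complex.log (1 - w)) ((1 - z)⁻¹ * -1) z :=
    (Complex.hasDerivAt_log hmem).comp z h1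
  have h2 : HasDerivAt (fun w : ℂ => -w - Complex.log (1 - w)) (-1 - (1 - z)⁻¹ * -1) z :=
    (hasDerivAt_id z).neg.sub hlog
  have h3 := h2.const_mul c
  have heq : c * (z / (1 - z)) = c * (-1 - (1 - z)⁻¹ * -1) := by field_simp; ring
  rw [heq]
  exact h3

theorem stmt7 (lam0 : ℝ) (hlam0 : 0 < lam0 ∧ lam0 < 1) (c : ℂ) (K : ℝ) (hK : 0 ≤ K) :
    ∃ K' : ℝ, ∀ (N : ℕ), 1 ≤ N → ∀ (φ φ' : ℝ → ℂ),
      (∀ lam ∈ Set.Icc (0 : ℝ) lam0, HasDerivAt φ (φ' lam) lam) →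
      φ 0 = 1 →
      (∀ lam ∈ Set.Icc (0 : ℝ) lam0, ‖φ lam‖ ≤ 1) →
      (∀ lam ∈ Set.Icc (0 : ℝ) lam0,
        ‖φ' lam - c * ((lam : ℂ) / (1 - (lam : ℂ))) * φ lam‖ ≤ K / Real.sqrt N) →
      ∀ lam ∈ Set.Icc (0 : ℝ) lam0,
        ‖φ lam - Complex.exp (c * (-(lam : ℂ) - Complex.log (1 - (lam : ℂ))))‖
          ≤ K' / Real.sqrt N := by
  obtain ⟨h0, h1⟩ := hlam0
  set L : ℝ := -Real.log (1 - lam0) with hLdef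
  have hLpos : 0 ≤ L := by
    have : Real.log (1 - lam0) ≤ 0 := Real.log_nonpos (by linarith) (by linarith)
    simp [hLdef]; linarith
  set M : ℝ := Real.exp (‖c‖ * (lam0 + L)) with hMdef
  have hM1 : 1 ≤ M := by
    rw [hMdef]
    have : 0 ≤ ‖c‖ * (lam0 + L) := mul_nonneg (norm_nonneg _) (by linarith)
    calc (1:ℝ) = Real.exp 0 := by simp
      _ ≤ _ := Real.exp_le_exp.2 this
  have hM0 : 0 < M := by linarith
  refine ⟨K * lam0 * M ^ 2, ?_⟩
  intro N hN φ φ' hderiv hφ0 hbdd hODE lam hlam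
  have hsqrt : 0 < Real.sqrt N := Real.sqrt_pos.2 (by exact_mod_cast Nat.pos_of_ne_zero (by omega))
  set F : ℝ → ℂ := fun t => c * (-(t:ℂ) - Complex.log (1 - (t:ℂ))) with hFdef
  have hFbound : ∀ t ∈ Set.Icc (0:ℝ) lam0, ‖F t‖ ≤ ‖c‖ * (lam0 + L) := by
    intro t ht
    have ht1 : 0 < 1 - t := by linarith [ht.2]
    have hlogeq : Complex.log (1 - (t:ℂ)) = ((Real.log (1 - t) : ℝ) : ℂ) := by
      rw [show (1 - (t:ℂ)) = ((1 - t : ℝ) : ℂ) by push_cast; ring,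
        ← Complex.ofReal_log (le_of_lt ht1)]
    have hwnorm : ‖(-(t:ℂ) - Complex.log (1 - (t:ℂ)))‖ ≤ lam0 + L := by
      rw [hlogeq, show (-(t:ℂ) - ((Real.log (1 - t) : ℝ) : ℂ)) = ((-t - Real.log (1 - t) : ℝ) : ℂ) by push_cast; ring]
      rw [Complex.norm_real, Real.norm_eq_abs]
      have hlognp : Real.log (1 - t) ≤ 0 := Real.log_nonpos (by linarith [ht.1, ht.2]) (by linarith [ht.1, ht.2])
      have hmono : Real.log (1 - lam0) ≤ Real.log (1 - t) :=
        Real.log_le_log (by linarith [ht.1, ht.2]) (by linarith [ht.1, ht.2])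
      rw [abs_le]
      simp only [hLdef]
      constructor <;> linarith [ht.1, ht.2]
    calc ‖F t‖ = ‖c‖ * ‖(-(t:ℂ) - Complex.log (1 - (t:ℂ)))‖ := norm_mul _ _
      _ ≤ ‖c‖ * (lam0 + L) := by
          exact mul_le_mul_of_nonneg_left hwnorm (norm_nonneg _)
  have hexpB : ∀ w : ℂ, ‖w‖ ≤ ‖c‖ * (lam0 + L) → ‖Complex.exp w‖ ≤ M := by
    intro w hw
    rw [Complex.norm_exp, hMdef]
    exact Real.exp_le_exp.2 (le_trans (Complex.re_le_norm w) hw)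
  have hexpF : ∀ t ∈ Set.Icc (0:ℝ) lam0, ‖Complex.exp (F t)‖ ≤ M := fun t ht =>
    hexpB _ (hFbound t ht)
  have hexpnegF : ∀ t ∈ Set.Icc (0:ℝ) lam0, ‖Complex.exp (-F t)‖ ≤ M := fun t ht =>
    hexpB _ (by rw [norm_neg]; exact hFbound t ht)
  have hFderiv : ∀ t ∈ Set.Icc (0:ℝ) lam0,
      HasDerivAt F (c * ((t:ℂ)/(1-(t:ℂ)))) t := by
    intro t ht
    have hz : ((1:ℂ) - (t:ℂ)).re > 0 := by
      simp only [Complex.sub_re, Complex.one_re, Complex.ofReal_re]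
      linarith [ht.2]
    exact (aux_deriv7 c t hz).comp_ofReal
  set ψ : ℝ → ℂ := fun t => φ t * Complex.exp (-F t) with hψdef
  have hψderiv : ∀ t ∈ Set.Icc (0:ℝ) lam0,
      HasDerivAt ψ ((φ' t - c * ((t:ℂ)/(1-(t:ℂ))) * φ t) * Complex.exp (-F t)) t := by
    intro t ht
    have hE : HasDerivAt (fun s : ℝ => Complex.exp (-F s))
        (-(c * ((t:ℂ)/(1-(t:ℂ)))) * Complex.exp (-F t)) t := by
      have := ((hFderiv t ht).neg).cexp
      simpa [mul_comm] using this
    have := (hderiv t ht).mul hE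
    have heq' : (φ' t - c * ((t:ℂ)/(1-(t:ℂ))) * φ t) * Complex.exp (-F t) = φ' t * Complex.exp (-F t) + φ t * (-(c * ((t:ℂ)/(1-(t:ℂ)))) * Complex.exp (-F t)) := by ring
    rw [heq']
    exact this
  have hψnorm : ∀ t ∈ Set.Icc (0:ℝ) lam0,
      ‖(φ' t - c * ((t:ℂ)/(1-(t:ℂ))) * φ t) * Complex.exp (-F t)‖ ≤ K / Real.sqrt N * M := by
    intro t ht
    rw [norm_mul]
    exact mul_le_mul (hODE t ht) (hexpnegF t ht) (norm_nonneg _)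
      (div_nonneg hK hsqrt.le)
  have key := norm_image_sub_le_of_norm_deriv_le_segment'
    (f := ψ) (a := 0) (b := lam0)
    (fun t ht => (hψderiv t ht).hasDerivWithinAt)
    (fun t ht => hψnorm t ⟨ht.1, ht.2.le⟩) lam hlam
  have hψ0 : ψ 0 = 1 := by
    simp [hψdef, hFdef, hφ0]
  rw [hψ0] at key
  -- φ lam - exp (F lam) = (ψ lam - 1) * exp (F lam)
  show ‖φ lam - Complex.exp (F lam)‖ ≤ K * lam0 * M ^ 2 / Real.sqrt N
  have hfactor : φ lam - Complex.exp (F lam) = (ψ lam - 1) * Complex.exp (F lam) := by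
    have : ψ lam * Complex.exp (F lam) = φ lam := by
      rw [hψdef]
      simp only []
      rw [mul_assoc, ← Complex.exp_add]
      simp
    rw [sub_mul, this, one_mul]
  have : ‖φ lam - Complex.exp (F lam)‖ ≤ (K / Real.sqrt N * M) * lam * M := by
    rw [hfactor, norm_mul]
    have h1' : ‖ψ lam - 1‖ ≤ (K / Real.sqrt N * M) * lam := by simpa using key
    exact mul_le_mul h1' (hexpF lam hlam) (norm_nonneg _)
      (mul_nonneg (mul_nonneg (div_nonneg hK hsqrt.le) hM0.le) hlam.1)
  calc ‖φ lam - Complex.exp (F lam)‖ ≤ (K / Real.sqrt N * M) * lam * M := this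
    _ ≤ K * lam0 * M ^ 2 / Real.sqrt N := by
        have hKN : 0 ≤ K / Real.sqrt N := div_nonneg hK hsqrt.le
        have hlamle : lam ≤ lam0 := hlam.2
        rw [div_mul_eq_mul_div, div_mul_eq_mul_div, div_mul_eq_mul_div]
        apply div_le_div_of_nonneg_right _ hsqrt.le
        nlinarith [mul_nonneg (mul_nonneg hK (mul_pos hM0 hM0).le) (sub_nonneg.2 hlamle), sq_nonneg M, hM0.le]
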